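/- Let G be a closed B-invariant subspace of H, let P be the orthogonal projection of H onto H0 ⊕ {0} and Q the orthogonal projection onto G. Then ||P - Q|| = 1 together with M_10(P,Q) = M_01(P,Q) = {0} holds if and only if G = {x ⊕ Xx : x in Dom(X)} for some closed densely defined unbounded (not norm-continuous on its domain) operator X from H0 to H1 which is a weak solution of the Riccati equation. -/

import Mathlib

open scoped ComplexInnerProductSpace

noncomputable section

section AuxProj

variable {E : Type*} [NormedAddCommGroup E] [InnerProductSpace ℂ E]

private lemma proj_inner [CompleteSpace E] (R : E →L[ℂ] E) (hsa : IsSelfAdjoint R)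
    (f g : E) : ⟪R f, g⟫ = ⟪f, R g⟫ := by
  conv_lhs => rw [← hsa.adjoint_eq]
  exact ContinuousLinearMap.adjoint_inner_left _ _ _

private lemma proj_mem_range_iff (R : E →L[ℂ] E) (h : IsIdempotentElem R) (f : E) :
    f ∈ LinearMap.range (R : E →ₗ[ℂ] E) ↔ R f = f := by
  constructor
  · rintro ⟨g, rfl⟩
    exact DFunLike.congr_fun h.eq g
  · intro hf; exact ⟨f, hf⟩

private lemma proj_eq_zero_iff [CompleteSpace E] (R : E →L[ℂ] E) (h : IsIdempotentElem R)
    (hsa : IsSelfAdjoint R) (f : E) :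
    R f = 0 ↔ ∀ g ∈ LinearMap.range (R : E →ₗ[ℂ] E), ⟪f, g⟫ = 0 := by
  constructor
  · rintro hf g ⟨u, rfl⟩
    rw [ContinuousLinearMap.coe_coe, ← proj_inner R hsa, hf, inner_zero_left]
  · intro hf
    have h1 : (⟪R f, R f⟫ : ℂ) = 0 := by
      rw [proj_inner R hsa]
      exact hf _ ⟨R f, rfl⟩
    exact inner_self_eq_zero.mp h1

private lemma proj_norm_le [CompleteSpace E] (R : E →L[ℂ] E) (h : IsIdempotentElem R)
    (hsa : IsSelfAdjoint R) (f : E) : ‖R f‖ ≤ ‖f‖ := by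
  have hRR : R (R f) = R f := DFunLike.congr_fun h.eq f
  have h1 : (⟪R f, R f⟫ : ℂ) = ⟪f, R f⟫ := by
    rw [proj_inner R hsa, hRR]
  have h2 : ‖R f‖ ^ 2 ≤ ‖f‖ * ‖R f‖ := by
    have h3 : ‖(⟪R f, R f⟫ : ℂ)‖ = ‖R f‖ ^ 2 := by
      rw [inner_self_eq_norm_sq_to_K]
      simp
    rw [← h3, h1]
    exact norm_inner_le_norm _ _
  nlinarith [norm_nonneg (R f), norm_nonneg f]

private lemma norm_sub_sq_orth (u v : E) (h : (⟪u, v⟫ : ℂ) = 0) :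
    ‖u - v‖ ^ 2 = ‖u‖ ^ 2 + ‖v‖ ^ 2 := by
  rw [sub_eq_add_neg]
  have := norm_add_sq_eq_norm_sq_add_norm_sq_of_inner_eq_zero (𝕜 := ℂ) u (-v)
      (by rw [inner_neg_right, h, neg_zero])
  rw [norm_neg] at this
  nlinarith [this]

private lemma key_le [CompleteSpace E] (P Q : E →L[ℂ] E)
    (hP : IsIdempotentElem P) (hPsa : IsSelfAdjoint P)
    (hQ : IsIdempotentElem Q) (hQsa : IsSelfAdjoint Q)
    (c : ℝ) (hc : 0 ≤ c)
    (h1 : ∀ f, Q f = 0 → ‖P f‖ ≤ c * ‖f‖)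
    (h2 : ∀ f, Q f = f → ‖f - P f‖ ≤ c * ‖f‖) :
    ‖P - Q‖ ≤ c := by
  refine ContinuousLinearMap.opNorm_le_bound _ hc fun f => ?_
  set g₁ := f - Q f with hg₁def
  set g₂ := Q f with hg₂def
  have hQQ : ∀ g : E, Q (Q g) = Q g := fun g => DFunLike.congr_fun hQ.eq g
  have hPP : ∀ g : E, P (P g) = P g := fun g => DFunLike.congr_fun hP.eq g
  have hQg₁ : Q g₁ = 0 := by
    rw [hg₁def, map_sub, hQQ, sub_self]
  have hQg₂ : Q g₂ = g₂ := hQQ f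
  have hsplit : (P - Q) f = P g₁ - (g₂ - P g₂) := by
    simp only [ContinuousLinearMap.sub_apply, hg₁def, hg₂def, map_sub]
    abel
  have horth : (⟪P g₁, g₂ - P g₂⟫ : ℂ) = 0 := by
    rw [proj_inner P hPsa]
    have hz : P (g₂ - P g₂) = 0 := by
      rw [map_sub, hPP, sub_self]
    rw [hz, inner_zero_right]
  have horth2 : (⟪g₁, g₂⟫ : ℂ) = 0 := by
    have h := proj_inner Q hQsa g₁ f
    rw [hQg₁, inner_zero_left] at h
    rw [hg₂def, ← h]
  have hf : f = g₁ + g₂ := by rw [hg₁def, hg₂def]; abel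
  have hnorm2 : ‖f‖ ^ 2 = ‖g₁‖ ^ 2 + ‖g₂‖ ^ 2 := by
    nth_rewrite 1 [hf]
    have := norm_add_sq_eq_norm_sq_add_norm_sq_of_inner_eq_zero _ _ horth2
    nlinarith [this]
  have hval : ‖(P - Q) f‖ ^ 2 = ‖P g₁‖ ^ 2 + ‖g₂ - P g₂‖ ^ 2 := by
    rw [hsplit]; exact norm_sub_sq_orth _ _ horth
  have hb1 := h1 g₁ hQg₁
  have hb2 := h2 g₂ hQg₂
  have hsq : ‖(P - Q) f‖ ^ 2 ≤ (c * ‖f‖) ^ 2 := by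
    rw [hval]
    nlinarith [pow_le_pow_left₀ (norm_nonneg (P g₁)) hb1 2,
      pow_le_pow_left₀ (norm_nonneg (g₂ - P g₂)) hb2 2, hnorm2,
      norm_nonneg g₁, norm_nonneg g₂, sq_nonneg c]
  calc ‖(P - Q) f‖ = Real.sqrt (‖(P - Q) f‖ ^ 2) := (Real.sqrt_sq (norm_nonneg _)).symm
    _ ≤ Real.sqrt ((c * ‖f‖) ^ 2) := Real.sqrt_le_sqrt hsq
    _ = c * ‖f‖ := Real.sqrt_sq (by positivity)

private lemma aux_le_c (C a b : ℝ) (hC : 0 ≤ C) (ha : 0 ≤ a) (hb : 0 ≤ b) (h : a ≤ C * b) :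
    a ≤ Real.sqrt (C ^ 2 / (1 + C ^ 2)) * Real.sqrt (a ^ 2 + b ^ 2) := by
  calc a = Real.sqrt (a ^ 2) := (Real.sqrt_sq ha).symm
    _ ≤ Real.sqrt (C ^ 2 / (1 + C ^ 2) * (a ^ 2 + b ^ 2)) := by
        apply Real.sqrt_le_sqrt
        rw [div_mul_eq_mul_div, le_div_iff₀ (by positivity)]
        nlinarith [pow_le_pow_left₀ ha h 2]
    _ = _ := Real.sqrt_mul (by positivity) _

private lemma aux_c_lt_one (C : ℝ) : Real.sqrt (C ^ 2 / (1 + C ^ 2)) < 1 := by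
  have h : C ^ 2 / (1 + C ^ 2) < 1 := by
    rw [div_lt_one (by positivity)]; nlinarith [sq_nonneg C]
  calc Real.sqrt (C ^ 2 / (1 + C ^ 2)) < Real.sqrt 1 := by
        exact Real.sqrt_lt_sqrt (by positivity) h
    _ = 1 := Real.sqrt_one

private lemma aux_unbound (c a b : ℝ) (hc0 : 0 ≤ c) (hc1 : c < 1)
    (ha : 0 ≤ a) (hb : 0 ≤ b) (h : a ≤ c * Real.sqrt (b ^ 2 + a ^ 2)) :
    a ≤ Real.sqrt (c ^ 2 / (1 - c ^ 2)) * b := by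
  have h2 : a ^ 2 ≤ c ^ 2 * (b ^ 2 + a ^ 2) := by
    have h4 := mul_self_le_mul_self ha h
    rw [mul_mul_mul_comm, Real.mul_self_sqrt (by positivity)] at h4
    nlinarith [h4]
  have h3 : a ^ 2 ≤ c ^ 2 / (1 - c ^ 2) * b ^ 2 := by
    rw [div_mul_eq_mul_div, le_div_iff₀ (by nlinarith)]
    nlinarith
  calc a = Real.sqrt (a ^ 2) := (Real.sqrt_sq ha).symm
    _ ≤ Real.sqrt (c ^ 2 / (1 - c ^ 2) * b ^ 2) := Real.sqrt_le_sqrt h3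
    _ = _ := by
        rw [Real.sqrt_mul (div_nonneg (sq_nonneg c) (by nlinarith)), Real.sqrt_sq hb]

end AuxProj

section AuxWithLp

variable {p : ENNReal} {α β : Type*}

theorem WithLp.equiv_fst (x : WithLp p (α × β)) : (WithLp.equiv p (α × β) x).fst = x.fst := rfl

theorem WithLp.equiv_snd (x : WithLp p (α × β)) : (WithLp.equiv p (α × β) x).snd = x.snd := rfl

theorem WithLp.equiv_symm_fst (x : α × β) : ((WithLp.equiv p (α × β)).symm x).fst = x.fst := rfl

theorem WithLp.equiv_symm_snd (x : α × β) : ((WithLp.equiv p (α × β)).symm x).snd = x.snd := rfl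

variable (p α β)

theorem WithLp.norm_equiv_symm_fst [Fact (1 ≤ p)] [SeminormedAddCommGroup α]
    [SeminormedAddCommGroup β] (x : α) :
    ‖(WithLp.equiv p (α × β)).symm (x, 0)‖ = ‖x‖ :=
  WithLp.norm_toLp_fst p α β x

theorem WithLp.norm_equiv_symm_snd [Fact (1 ≤ p)] [SeminormedAddCommGroup α]
    [SeminormedAddCommGroup β] (y : β) :
    ‖(WithLp.equiv p (α × β)).symm (0, y)‖ = ‖y‖ :=
  WithLp.norm_toLp_snd p α β y

end AuxWithLp


/-- Let `G` be a closed `B`-invariant subspace of `H = H₀ ⊕ H₁`, let `P` be the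
orthogonal projection onto `H₀ ⊕ {0}` and `Q` the orthogonal projection onto `G`.  Then
`‖P - Q‖ = 1` together with `M₁₀(P,Q) = M₀₁(P,Q) = {0}` holds iff `G` is the graph of a closed
densely defined unbounded operator `X : H₀ → H₁` which is a weak solution of the Riccati
equation `A₁ X - X A₀ - X V X + V* = 0`. -/
theorem norm_sub_proj_eq_one_iff_graph_of_unbounded_riccati_solution
    {H0 H1 : Type*}
    [NormedAddCommGroup H0] [InnerProductSpace ℂ H0] [CompleteSpace H0]
    [TopologicalSpace.SeparableSpace H0]
    [NormedAddCommGroup H1] [InnerProductSpace ℂ H1] [CompleteSpace H1]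
    [TopologicalSpace.SeparableSpace H1]
    (A0 : H0 →L[ℂ] H0) (A1 : H1 →L[ℂ] H1) (V : H1 →L[ℂ] H0)
    (hA0 : IsSelfAdjoint A0) (hA1 : IsSelfAdjoint A1)
    (B : WithLp 2 (H0 × H1) →L[ℂ] WithLp 2 (H0 × H1))
    (hB : ∀ u : WithLp 2 (H0 × H1),
      WithLp.equiv 2 (H0 × H1) (B u) =
        (A0 (WithLp.equiv 2 (H0 × H1) u).1 + V (WithLp.equiv 2 (H0 × H1) u).2,
         ContinuousLinearMap.adjoint V (WithLp.equiv 2 (H0 × H1) u).1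
           + A1 (WithLp.equiv 2 (H0 × H1) u).2))
    (G : Submodule ℂ (WithLp 2 (H0 × H1)))
    (hGclosed : IsClosed (G : Set (WithLp 2 (H0 × H1))))
    (hGinv : ∀ u ∈ G, B u ∈ G)
    (P Q : WithLp 2 (H0 × H1) →L[ℂ] WithLp 2 (H0 × H1))
    (hP : IsIdempotentElem P) (hPsa : IsSelfAdjoint P)
    (hQ : IsIdempotentElem Q) (hQsa : IsSelfAdjoint Q)
    (hPran : LinearMap.range (P : WithLp 2 (H0 × H1) →ₗ[ℂ] WithLp 2 (H0 × H1)) =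
      ((⊤ : Submodule ℂ H0).prod (⊥ : Submodule ℂ H1)).map
        (WithLp.linearEquiv 2 ℂ (H0 × H1)).symm.toLinearMap)
    (hQran : LinearMap.range (Q : WithLp 2 (H0 × H1) →ₗ[ℂ] WithLp 2 (H0 × H1)) = G) :
    (‖P - Q‖ = 1 ∧
      {f : WithLp 2 (H0 × H1) | P f = f ∧ Q f = 0} = {0} ∧
      {f : WithLp 2 (H0 × H1) | P f = 0 ∧ Q f = f} = {0}) ↔
    ∃ X : H0 →ₗ.[ℂ] H1,
      Dense (X.domain : Set H0) ∧
      IsClosed (X.graph : Set (H0 × H1)) ∧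
      -- `X` is unbounded, i.e., not norm-continuous on its domain
      (¬ ∃ C : ℝ, ∀ x : X.domain, ‖X x‖ ≤ C * ‖(x : H0)‖) ∧
      -- `X` is a weak solution of the Riccati equation
      (∀ (x : X.domain) (y : X.adjoint.domain),
        ⟪A1 (y : H1), X x⟫ - ⟪X.adjoint y, A0 (x : H0)⟫ - ⟪X.adjoint y, V (X x)⟫
          + ⟪V (y : H1), (x : H0)⟫ = 0) ∧
      G = X.graph.map (WithLp.linearEquiv 2 ℂ (H0 × H1)).symm.toLinearMap := by
  classical
  set E := WithLp 2 (H0 × H1) with hEdef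
  set eE := WithLp.equiv 2 (H0 × H1) with heEdef
  -- basic inner-product and norm facts on `E`
  have hinner : ∀ u v : E, (⟪u, v⟫ : ℂ) = ⟪u.fst, v.fst⟫ + ⟪u.snd, v.snd⟫ :=
    fun u v => WithLp.prod_inner_apply u v
  have hnormE : ∀ u : E, ‖u‖ = Real.sqrt (‖u.fst‖ ^ 2 + ‖u.snd‖ ^ 2) := by
    intro u
    rw [← WithLp.prod_norm_sq_eq_of_L2, Real.sqrt_sq (norm_nonneg u)]
  -- componentwise operations are definitional
  have hsub_fst : ∀ u v : E, (u - v).fst = u.fst - v.fst := fun _ _ => rfl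
  have hsub_snd : ∀ u v : E, (u - v).snd = u.snd - v.snd := fun _ _ => rfl
  -- range of `P`
  have hranP : ∀ u : E, (u ∈ LinearMap.range (P : E →ₗ[ℂ] E) ↔ u.snd = 0) := by
    intro u
    rw [hPran, Submodule.mem_map]
    constructor
    · rintro ⟨⟨a, b⟩, hab, rfl⟩
      rcases Submodule.mem_prod.mp hab with ⟨-, hb⟩
      rw [Submodule.mem_bot] at hb
      simpa using hb
    · intro hu
      refine ⟨eE u, Submodule.mem_prod.mpr ⟨trivial, ?_⟩, ?_⟩
      · rw [Submodule.mem_bot]; exact hu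
      · simp [heEdef]
  -- explicit formula for `P`
  have hPapply : ∀ u : E, P u = eE.symm (u.fst, 0) := by
    intro u
    have h2 : (P u).snd = 0 := (hranP (P u)).mp ⟨u, rfl⟩
    have hzero : P (u - P u) = 0 := by
      have hPP : P (P u) = P u := DFunLike.congr_fun hP.eq u
      rw [map_sub, hPP, sub_self]
    have hperp := (proj_eq_zero_iff P hP hPsa (u - P u)).mp hzero
    have h1 : u.fst - (P u).fst = 0 := by
      have hmem : eE.symm ((u - P u).fst, 0) ∈ LinearMap.range (P : E →ₗ[ℂ] E) :=
        (hranP _).mpr (by rw [heEdef, WithLp.equiv_symm_snd])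
      have h0 := hperp _ hmem
      rw [hinner, heEdef, WithLp.equiv_symm_fst, WithLp.equiv_symm_snd, inner_zero_right,
        add_zero] at h0
      have := inner_self_eq_zero.mp h0
      rw [hsub_fst] at this
      exact this
    have hfst : (P u).fst = u.fst := by
      have := sub_eq_zero.mp h1
      exact this.symm
    apply eE.injective
    rw [Equiv.apply_symm_apply]
    exact Prod.ext (by rw [heEdef, WithLp.equiv_fst, hfst]) (by rw [heEdef, WithLp.equiv_snd, h2])
  -- facts about `Q`
  have hQfix : ∀ f : E, f ∈ G → Q f = f := by
    intro f hf
    refine (proj_mem_range_iff Q hQ f).mp ?_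
    rw [hQran]; exact hf
  have hQzero : ∀ f : E, (Q f = 0 ↔ ∀ g ∈ G, (⟪f, g⟫ : ℂ) = 0) := by
    intro f
    rw [proj_eq_zero_iff Q hQ hQsa, hQran]
  constructor
  · -- forward direction
    rintro ⟨hnorm, hM10, hM01⟩
    set Ghat : Submodule ℂ (H0 × H1) :=
      G.map (WithLp.linearEquiv 2 ℂ (H0 × H1) : E →ₗ[ℂ] H0 × H1) with hGhatdef
    have hmemGhat : ∀ v : H0 × H1, v ∈ Ghat ↔ eE.symm v ∈ G := by
      intro v
      rw [hGhatdef, Submodule.mem_map_equiv]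
      rfl
    have hg : ∀ v ∈ Ghat, v.fst = 0 → v.snd = 0 := by
      intro v hv h0
      set u := eE.symm v with hud
      have huG : u ∈ G := (hmemGhat v).mp hv
      have hQu : Q u = u := hQfix u huG
      have hPu : P u = 0 := by
        rw [hPapply]
        have : u.fst = (0 : H0) := by rw [hud, heEdef, WithLp.equiv_symm_fst, h0]
        rw [this]
        apply eE.injective
        simp [heEdef]
      have hu0 : u ∈ ({0} : Set E) := by
        rw [← hM01]; exact ⟨hPu, hQu⟩
      have hu0' : u = 0 := hu0
      have : v.snd = u.snd := by rw [hud, heEdef, WithLp.equiv_symm_snd]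
      rw [this, hu0']
      rfl
    have hg' : ∀ (x : H0 × H1) (_hx : x ∈ Ghat) (_hx' : x.fst = 0), x.snd = 0 := hg
    have hgraph : Ghat.toLinearPMap.graph = Ghat := Submodule.toLinearPMap_graph_eq _ hg'
    have hXdom : Ghat.toLinearPMap.domain = Ghat.map (LinearMap.fst ℂ H0 H1) :=
      Submodule.toLinearPMap_domain _
    -- density of the domain
    have hdense : Dense ((Ghat.toLinearPMap).domain : Set H0) := by
      rw [Submodule.dense_iff_topologicalClosure_eq_top,
        Submodule.topologicalClosure_eq_top_iff, Submodule.eq_bot_iff]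
      intro w hw
      rw [Submodule.mem_orthogonal'] at hw
      set u : E := eE.symm (w, 0) with hud
      have hufst : u.fst = w := by rw [hud, heEdef, WithLp.equiv_symm_fst]
      have husnd : u.snd = (0 : H1) := by rw [hud, heEdef, WithLp.equiv_symm_snd]
      have hPu : P u = u := by
        rw [hPapply, hufst, hud]
      have hQu : Q u = 0 := by
        rw [hQzero]
        intro g hgG
        have hfst : g.fst ∈ Ghat.toLinearPMap.domain := by
          rw [hXdom]
          refine Submodule.mem_map.mpr ⟨eE g, ?_, ?_⟩
          · exact (hmemGhat (eE g)).mpr (by simpa [heEdef] using hgG)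
          · rw [heEdef]; exact WithLp.equiv_fst g
        have hw0 : (⟪w, g.fst⟫ : ℂ) = 0 := hw g.fst hfst
        rw [hinner, hufst, husnd, hw0, inner_zero_left, add_zero]
      have hu0 : u ∈ ({0} : Set E) := by rw [← hM10]; exact ⟨hPu, hQu⟩
      have hu0' : u = 0 := hu0
      rw [← hufst, hu0']
      rfl
    -- closedness of the graph
    have hclosedX : IsClosed ((Ghat.toLinearPMap).graph : Set (H0 × H1)) := by
      rw [hgraph]
      have hset : (Ghat : Set (H0 × H1)) =
          (WithLp.prodContinuousLinearEquiv 2 ℂ H0 H1).symm ⁻¹' (G : Set E) := by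
        ext v
        constructor
        · intro hv
          have := (hmemGhat v).mp hv
          simpa [heEdef] using this
        · intro hv
          refine (hmemGhat v).mpr ?_
          simpa [heEdef] using hv
      rw [hset]
      exact hGclosed.preimage (WithLp.prodContinuousLinearEquiv 2 ℂ H0 H1).symm.continuous
    -- G is the pullback of the graph
    have hGeq : G =
        (Ghat.toLinearPMap).graph.map (WithLp.linearEquiv 2 ℂ (H0 × H1)).symm.toLinearMap := by
      rw [hgraph]
      ext u
      rw [Submodule.mem_map_equiv, hmemGhat]
      simp [heEdef]
    -- unboundedness
    have hunb : ¬∃ C : ℝ, ∀ x : (Ghat.toLinearPMap).domain,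
        ‖Ghat.toLinearPMap x‖ ≤ C * ‖(x : H0)‖ := by
      rintro ⟨C₀, hC₀⟩
      set C := max C₀ 0 with hCdef
      have hC0 : (0 : ℝ) ≤ C := le_max_right _ _
      have hC : ∀ x : (Ghat.toLinearPMap).domain,
          ‖Ghat.toLinearPMap x‖ ≤ C * ‖(x : H0)‖ := fun x =>
        le_trans (hC₀ x) (mul_le_mul_of_nonneg_right (le_max_left _ _) (norm_nonneg _))
      set c := Real.sqrt (C ^ 2 / (1 + C ^ 2)) with hcdef
      have hc0 : (0 : ℝ) ≤ c := Real.sqrt_nonneg _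
      have hlt : c < 1 := aux_c_lt_one C
      have hle : ‖P - Q‖ ≤ c := by
        apply key_le P Q hP hPsa hQ hQsa c hc0
        · -- bound on G-perp
          intro f hf
          have hperp := (hQzero f).mp hf
          have hbound : ∀ z ∈ (Ghat.toLinearPMap).domain,
              ‖(⟪f.fst, z⟫ : ℂ)‖ ≤ C * ‖f.snd‖ * ‖z‖ := by
            intro z hz
            set x : (Ghat.toLinearPMap).domain := ⟨z, hz⟩ with hxdef
            have hgr : ((z : H0), Ghat.toLinearPMap x) ∈ Ghat := by
              have hgg := Ghat.toLinearPMap.mem_graph x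
              rwa [hgraph] at hgg
            have hgmem : eE.symm (z, Ghat.toLinearPMap x) ∈ G := (hmemGhat _).mp hgr
            have h0 := hperp _ hgmem
            rw [hinner, heEdef, WithLp.equiv_symm_fst, WithLp.equiv_symm_snd] at h0
            have heq : (⟪f.fst, z⟫ : ℂ) = -⟪f.snd, Ghat.toLinearPMap x⟫ := by
              linear_combination h0
            rw [heq, norm_neg]
            calc ‖(⟪f.snd, Ghat.toLinearPMap x⟫ : ℂ)‖
                ≤ ‖f.snd‖ * ‖Ghat.toLinearPMap x‖ := norm_inner_le_norm _ _
              _ ≤ ‖f.snd‖ * (C * ‖z‖) :=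
                  mul_le_mul_of_nonneg_left (hC x) (norm_nonneg _)
              _ = C * ‖f.snd‖ * ‖z‖ := by ring
          have hall : ∀ z : H0, ‖(⟪f.fst, z⟫ : ℂ)‖ ≤ C * ‖f.snd‖ * ‖z‖ := by
            intro z
            have hclosedset : IsClosed {z : H0 | ‖(⟪f.fst, z⟫ : ℂ)‖ ≤ C * ‖f.snd‖ * ‖z‖} := by
              apply isClosed_le
              · exact Continuous.norm (Continuous.inner continuous_const continuous_id)
              · exact continuous_const.mul continuous_norm
            have hsubset := closure_minimal (fun z hz => hbound z hz) hclosedset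
            exact hsubset (by rw [hdense.closure_eq]; trivial)
          have hf1 : ‖f.fst‖ ≤ C * ‖f.snd‖ := by
            have h := hall f.fst
            rw [inner_self_eq_norm_sq_to_K] at h
            simp only [norm_pow, RCLike.norm_ofReal, abs_norm] at h
            rcases eq_or_lt_of_le (norm_nonneg f.fst) with h0 | hpos
            · rw [← h0]; positivity
            · nlinarith [h, hpos]
          have hPfnorm : ‖P f‖ = ‖f.fst‖ := by
            rw [hPapply, heEdef]
            exact WithLp.norm_equiv_symm_fst 2 H0 H1 f.fst
          rw [hPfnorm, hnormE f, hcdef]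
          exact aux_le_c C _ _ hC0 (norm_nonneg _) (norm_nonneg _) hf1
        · -- bound on G
          intro f hf
          have hfG : f ∈ G := by rw [← hQran]; exact ⟨f, hf⟩
          have hgr : eE f ∈ Ghat := (hmemGhat (eE f)).mpr (by simpa [heEdef] using hfG)
          rw [← hgraph] at hgr
          rcases (LinearPMap.mem_graph_iff _).mp hgr with ⟨x, hx1, hx2⟩
          have h1 : (f - P f).fst = 0 := by
            rw [hsub_fst, hPapply, heEdef, WithLp.equiv_symm_fst, sub_self]
          have h2 : (f - P f).snd = f.snd := by
            rw [hsub_snd, hPapply, heEdef, WithLp.equiv_symm_snd, sub_zero]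
          have hnfP : ‖f - P f‖ = ‖f.snd‖ := by
            rw [hnormE, h1, h2, norm_zero]
            simpa using Real.sqrt_sq (norm_nonneg f.snd)
          have hb : ‖f.snd‖ ≤ C * ‖f.fst‖ := by
            calc ‖f.snd‖ = ‖Ghat.toLinearPMap x‖ := by
                  rw [hx2, heEdef, WithLp.equiv_snd]
              _ ≤ C * ‖(x : H0)‖ := hC x
              _ = C * ‖f.fst‖ := by rw [hx1, heEdef, WithLp.equiv_fst]
          rw [hnfP, hnormE f, hcdef]
          have hres := aux_le_c C ‖f.snd‖ ‖f.fst‖ hC0 (norm_nonneg _) (norm_nonneg _) hb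
          rwa [add_comm (‖f.snd‖ ^ 2)] at hres
      rw [hnorm] at hle
      linarith
    -- the Riccati equation
    have hric : ∀ (x : (Ghat.toLinearPMap).domain) (y : (Ghat.toLinearPMap).adjoint.domain),
        (⟪A1 (y : H1), Ghat.toLinearPMap x⟫ : ℂ)
          - ⟪(Ghat.toLinearPMap).adjoint y, A0 (x : H0)⟫
          - ⟪(Ghat.toLinearPMap).adjoint y, V (Ghat.toLinearPMap x)⟫
          + ⟪V (y : H1), (x : H0)⟫ = 0 := by
      have hformal := LinearPMap.adjoint_isFormalAdjoint hdense
      intro x y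
      have hmemu : ((x : H0), Ghat.toLinearPMap x) ∈ Ghat := by
        have hgg := Ghat.toLinearPMap.mem_graph x
        rwa [hgraph] at hgg
      have huG : eE.symm ((x : H0), Ghat.toLinearPMap x) ∈ G := (hmemGhat _).mp hmemu
      set u : E := eE.symm ((x : H0), Ghat.toLinearPMap x) with hud
      have hBuG := hGinv _ huG
      have hu1 : (eE u).1 = (x : H0) := by rw [hud]; simp [heEdef]
      have hu2 : (eE u).2 = Ghat.toLinearPMap x := by rw [hud]; simp [heEdef]
      have hBu2 : eE (B u) ∈ Ghat := (hmemGhat _).mpr (by simpa [heEdef] using hBuG)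
      rw [← hgraph, hB u, hu1, hu2] at hBu2
      rcases (LinearPMap.mem_graph_iff _).mp hBu2 with ⟨x', hx'1, hx'2⟩
      have key : (⟪(Ghat.toLinearPMap).adjoint y, A0 (x : H0)⟫ : ℂ)
          + ⟪(Ghat.toLinearPMap).adjoint y, V (Ghat.toLinearPMap x)⟫
          = ⟪V (y : H1), (x : H0)⟫ + ⟪A1 (y : H1), Ghat.toLinearPMap x⟫ := by
        rw [← inner_add_right]
        have h1 : A0 (x : H0) + V (Ghat.toLinearPMap x) = (x' : H0) := hx'1.symm
        rw [h1, hformal y x', hx'2, inner_add_right]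
        congr 1
        · exact ContinuousLinearMap.adjoint_inner_right V _ _
        · rw [← ContinuousLinearMap.adjoint_inner_left A1, hA1.adjoint_eq]
      linear_combination -key
    exact ⟨Ghat.toLinearPMap, hdense, hclosedX, hunb, hric, hGeq⟩
  · -- backward direction
    rintro ⟨X, hdense, hclosedX, hunb, hric, hG⟩
    have memG : ∀ u : E, u ∈ G ↔ eE u ∈ X.graph := by
      intro u
      rw [hG, Submodule.mem_map_equiv, LinearEquiv.symm_symm]
      rfl
    have h0E : eE (0 : E) = (0 : H0 × H1) := rfl
    have hsymm_sub : ∀ a b : H0 × H1, eE.symm a - eE.symm b = eE.symm (a - b) := fun _ _ => rfl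
    -- M₁₀ = {0}
    have hMone : {f : E | P f = f ∧ Q f = 0} = {0} := by
      apply Set.eq_singleton_iff_unique_mem.mpr
      refine ⟨⟨map_zero P, map_zero Q⟩, ?_⟩
      rintro f ⟨hPf, hQf⟩
      have hsnd : f.snd = 0 := by
        conv_lhs => rw [← hPf, hPapply]
        rw [heEdef, WithLp.equiv_symm_snd]
      have hperp := (hQzero f).mp hQf
      have hfst : f.fst = 0 := by
        have hb : ∀ z ∈ X.domain, (⟪f.fst, z⟫ : ℂ) = 0 := by
          intro z hz
          set x : X.domain := ⟨z, hz⟩ with hxdef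
          have hgmem : eE.symm ((z : H0), X x) ∈ G := by
            rw [memG]
            rw [Equiv.apply_symm_apply]; exact X.mem_graph x
          have h0 := hperp _ hgmem
          rw [hinner, heEdef, WithLp.equiv_symm_fst, WithLp.equiv_symm_snd, hsnd,
            inner_zero_left, add_zero] at h0
          exact h0
        have hall : ∀ z : H0, (⟪f.fst, z⟫ : ℂ) = 0 := by
          intro z
          have hcl : IsClosed {z : H0 | (⟪f.fst, z⟫ : ℂ) = 0} :=
            isClosed_eq (Continuous.inner continuous_const continuous_id) continuous_const
          have hsubset := closure_minimal (fun z hz => hb z hz) hcl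
          exact hsubset (by rw [hdense.closure_eq]; trivial)
        exact inner_self_eq_zero.mp (hall f.fst)
      apply eE.injective
      rw [h0E]
      exact Prod.ext (by rw [heEdef, WithLp.equiv_fst, hfst]; rfl)
        (by rw [heEdef, WithLp.equiv_snd, hsnd]; rfl)
    -- M₀₁ = {0}
    have hMtwo : {f : E | P f = 0 ∧ Q f = f} = {0} := by
      apply Set.eq_singleton_iff_unique_mem.mpr
      refine ⟨⟨map_zero P, map_zero Q⟩, ?_⟩
      rintro f ⟨hPf, hQf⟩
      have hfst : f.fst = 0 := by
        have h := hPapply f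
        rw [hPf] at h
        have h2 := congrArg eE h
        rw [Equiv.apply_symm_apply, h0E] at h2
        exact (congrArg Prod.fst h2).symm
      have hfG : f ∈ G := by rw [← hQran]; exact ⟨f, hQf⟩
      have hgr := (memG f).mp hfG
      have hsnd : f.snd = 0 := by
        have hs := X.graph_fst_eq_zero_snd (x := (eE f).fst) (x' := (eE f).snd)
          (by rwa [Prod.mk.eta]) (by rw [heEdef, WithLp.equiv_fst]; exact hfst)
        rw [heEdef, WithLp.equiv_snd] at hs
        exact hs
      apply eE.injective
      rw [h0E]
      exact Prod.ext (by rw [heEdef, WithLp.equiv_fst, hfst]; rfl)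
        (by rw [heEdef, WithLp.equiv_snd, hsnd]; rfl)
    -- the norm is one
    have hle : ‖P - Q‖ ≤ 1 := by
      apply key_le P Q hP hPsa hQ hQsa 1 zero_le_one
      · intro f _
        rw [one_mul]
        exact proj_norm_le P hP hPsa f
      · intro f _
        have h1 : IsIdempotentElem ((1 : E →L[ℂ] E) - P) := hP.one_sub
        have h2 : IsSelfAdjoint ((1 : E →L[ℂ] E) - P) := IsSelfAdjoint.sub (R := E →L[ℂ] E) (IsSelfAdjoint.one _) hPsa
        have h3 := proj_norm_le _ h1 h2 f
        rw [one_mul]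
        simpa using h3
    have hge : (1 : ℝ) ≤ ‖P - Q‖ := by
      by_contra hcon
      push_neg at hcon
      apply hunb
      refine ⟨Real.sqrt (‖P - Q‖ ^ 2 / (1 - ‖P - Q‖ ^ 2)), fun x => ?_⟩
      set f : E := eE.symm ((x : H0), X x) with hfd
      have hfG : f ∈ G := by
        rw [memG]
        simpa [heEdef, hfd] using X.mem_graph x
      have hQf : Q f = f := hQfix f hfG
      have hffst : f.fst = (x : H0) := by rw [hfd, heEdef, WithLp.equiv_symm_fst]
      have hPQ : (P - Q) f = eE.symm (0, -(X x)) := by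
        rw [ContinuousLinearMap.sub_apply, hQf, hPapply, hffst, hfd, hsymm_sub]
        congr 1
        rw [Prod.mk_sub_mk, sub_self, zero_sub]
      have hnormPQ : ‖(P - Q) f‖ = ‖X x‖ := by
        rw [hPQ, heEdef, WithLp.norm_equiv_symm_snd, norm_neg]
      have hnf : ‖f‖ = Real.sqrt (‖(x : H0)‖ ^ 2 + ‖X x‖ ^ 2) := by
        rw [hnormE f, hfd, heEdef, WithLp.equiv_symm_fst, WithLp.equiv_symm_snd]
      have hb := ContinuousLinearMap.le_opNorm (P - Q) f
      rw [hnormPQ, hnf] at hb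
      exact aux_unbound _ _ _ (norm_nonneg _) hcon (norm_nonneg _) (norm_nonneg _) hb
    exact ⟨le_antisymm hle hge, hMone, hMtwo⟩

end
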